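/- For all n ≥ 1 and k ≥ 0, ∫_0^1 x^{n-1} (ln(1-x))^k dx = ((-1)^k k!/n) · Σ_{l=1}^{n} C(n,l) (-1)^{l-1} / l^k. -/

import Mathlib

open MeasureTheory
open Real intervalIntegral


lemma abs_log_pow_le (k : ℕ) {x : ℝ} (hx : 0 < x) (hx1 : x ≤ 1) :
    |Real.log x| ^ k ≤ 2 ^ k * k.factorial * x ^ (-(1/2) : ℝ) := by
  have hl : Real.log x ≤ 0 := Real.log_nonpos hx.le hx1
  have habs : |Real.log x| = -Real.log x := abs_of_nonpos hl
  have ht : (0:ℝ) ≤ -Real.log x / 2 := by linarith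
  have h := Real.pow_div_factorial_le_exp (-Real.log x / 2) ht k
  have hexp : Real.exp (-Real.log x / 2) = x ^ (-(1/2) : ℝ) := by
    rw [Real.rpow_def_of_pos hx]; ring_nf
  rw [hexp] at h
  rw [habs]
  have h2 : (-Real.log x / 2) ^ k = (-Real.log x) ^ k / 2 ^ k := by
    rw [div_pow]
  rw [h2, div_div] at h
  have hfac : (0:ℝ) < 2 ^ k * k.factorial := by positivity
  calc (-Real.log x) ^ k = (2 ^ k * (k.factorial:ℝ)) * ((-Real.log x) ^ k / (2 ^ k * k.factorial)) := by
        field_simp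
    _ ≤ 2 ^ k * k.factorial * x ^ (-(1/2) : ℝ) := by
        apply mul_le_mul_of_nonneg_left _ hfac.le
        exact_mod_cast h

lemma intervalIntegrable_pow_mul_log_pow (j k : ℕ) :
    IntervalIntegrable (fun x : ℝ => x ^ j * Real.log x ^ k) volume 0 1 := by
  rw [intervalIntegrable_iff_integrableOn_Ioc_of_le zero_le_one]
  have hg : IntegrableOn (fun x : ℝ => 2 ^ k * (k.factorial:ℝ) * x ^ (-(1/2) : ℝ))
      (Set.Ioc (0:ℝ) 1) := by
    apply Integrable.const_mul
    have := intervalIntegral.intervalIntegrable_rpow' (a := (0:ℝ)) (b := 1)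
      (show (-1:ℝ) < -(1/2) by norm_num)
    rwa [intervalIntegrable_iff_integrableOn_Ioc_of_le zero_le_one] at this
  apply Integrable.mono' hg
  · exact ((measurable_id.pow_const j).mul (Real.measurable_log.pow_const k)).aestronglyMeasurable
  · filter_upwards [ae_restrict_mem measurableSet_Ioc] with x hx
    have hx0 : 0 < x := hx.1
    have hx1 : x ≤ 1 := hx.2
    have hxj : x ^ j ≤ 1 := pow_le_one₀ hx0.le hx1
    have hb := abs_log_pow_le k hx0 hx1
    have hnn : (0:ℝ) ≤ x ^ j := by positivity
    calc ‖x ^ j * Real.log x ^ k‖ = x ^ j * |Real.log x| ^ k := by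
          rw [norm_mul, norm_pow, norm_pow, Real.norm_eq_abs, Real.norm_eq_abs,
            abs_of_nonneg hx0.le]
      _ ≤ 1 * (2 ^ k * k.factorial * x ^ (-(1/2) : ℝ)) := by
          apply mul_le_mul hxj hb (by positivity) zero_le_one
      _ = 2 ^ k * (k.factorial:ℝ) * x ^ (-(1/2) : ℝ) := by ring

lemma integral_pow_mul_log_pow_aux (j k : ℕ) :
    ∫ x in (0:ℝ)..1, x ^ j * Real.log x ^ k
      = (-1:ℝ) ^ k * k.factorial / ((j:ℝ)+1) ^ (k+1) := by
  induction k with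
  | zero => simp [integral_pow]
  | succ k ih =>
    have hJ : (0:ℝ) < (j:ℝ) + 1 := by positivity
    have key : ∫ x in (0:ℝ)..1,
        (x ^ j * Real.log x ^ (k+1) + ((k:ℝ)+1)/((j:ℝ)+1) * (x ^ j * Real.log x ^ k))
          = 0 := by
      have hF := intervalIntegral.integral_eq_sub_of_hasDerivAt_of_tendsto
        (a := (0:ℝ)) (b := 1) zero_lt_one
        (f := fun x => x ^ (j+1) * Real.log x ^ (k+1) / ((j:ℝ)+1))
        (f' := fun x => x ^ j * Real.log x ^ (k+1)
          + ((k:ℝ)+1)/((j:ℝ)+1) * (x ^ j * Real.log x ^ k))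
        (fa := 0) (fb := 0) ?_ ?_ ?_ ?_
      · rw [hF]; ring
      · -- derivative
        intro x hx
        have hx0 : (0:ℝ) < x := hx.1
        have h1 : HasDerivAt (fun y : ℝ => y ^ (j+1)) (((j:ℝ)+1) * x ^ j) x := by
          have := hasDerivAt_pow (j+1) x
          simpa [Nat.add_sub_cancel] using this
        have h2 : HasDerivAt (fun y : ℝ => Real.log y ^ (k+1))
            (((k:ℝ)+1) * Real.log x ^ k * x⁻¹) x := by
          have := (Real.hasDerivAt_log hx0.ne').pow (k+1)
          simp only [Nat.add_sub_cancel, Nat.cast_add, Nat.cast_one] at this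
          exact this
        have h3 := (h1.mul h2).div_const ((j:ℝ)+1)
        refine h3.congr_deriv ?_
        field_simp
        ring
      · -- integrable
        exact (intervalIntegrable_pow_mul_log_pow j (k+1)).add
          ((intervalIntegrable_pow_mul_log_pow j k).const_mul _)
      · -- tendsto at 0+
        have hC : (0:ℝ) ≤ 2 ^ (k+1) * ((k+1).factorial : ℝ) / ((j:ℝ)+1) := by positivity
        apply squeeze_zero_norm'
          (a := fun x => (2 ^ (k+1) * ((k+1).factorial : ℝ) / ((j:ℝ)+1)) * x ^ ((1:ℝ)/2))
        · filter_upwards [Ioo_mem_nhdsGT_of_mem (Set.mem_Ico.2 ⟨le_refl (0:ℝ), zero_lt_one⟩)]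
            with x hx
          have hx0 : (0:ℝ) < x := hx.1
          have hx1 : x ≤ 1 := hx.2.le
          have hb := abs_log_pow_le (k+1) hx0 hx1
          have hxj : x ^ (j+1) ≤ x := by
            calc x ^ (j+1) ≤ x ^ 1 := pow_le_pow_of_le_one hx0.le hx1 (by omega)
              _ = x := pow_one x
          have hxx : x * x ^ (-(1/2) : ℝ) = x ^ ((1:ℝ)/2) := by
            nth_rewrite 1 [← Real.rpow_one x]
            rw [← Real.rpow_add hx0]
            norm_num
          calc ‖x ^ (j+1) * Real.log x ^ (k+1) / ((j:ℝ)+1)‖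
              = x ^ (j+1) * |Real.log x| ^ (k+1) / ((j:ℝ)+1) := by
                rw [norm_div, norm_mul, norm_pow, norm_pow, Real.norm_eq_abs,
                  Real.norm_eq_abs, Real.norm_eq_abs, abs_of_nonneg hx0.le,
                  abs_of_pos hJ]
            _ ≤ x * (2 ^ (k+1) * ((k+1).factorial:ℝ) * x ^ (-(1/2) : ℝ)) / ((j:ℝ)+1) := by
                gcongr
            _ = (2 ^ (k+1) * ((k+1).factorial : ℝ) / ((j:ℝ)+1)) * x ^ ((1:ℝ)/2) := by
                rw [← hxx]; ring
        · have h0 : Filter.Tendsto (fun x : ℝ => x ^ ((1:ℝ)/2)) (nhds 0) (nhds 0) := by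
            have := (Real.continuousAt_rpow_const 0 ((1:ℝ)/2) (Or.inr (by norm_num)))
            simpa [Real.zero_rpow (by norm_num : ((1:ℝ)/2) ≠ 0)] using this.tendsto
          have := h0.const_mul (2 ^ (k+1) * ((k+1).factorial : ℝ) / ((j:ℝ)+1))
          simpa using this.mono_left nhdsWithin_le_nhds
      · -- tendsto at 1-
        have hcont : ContinuousAt
            (fun x : ℝ => x ^ (j+1) * Real.log x ^ (k+1) / ((j:ℝ)+1)) 1 := by
          apply ContinuousAt.div_const
          exact (continuousAt_pow _ _).mul ((Real.continuousAt_log one_ne_zero).pow _)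
        have : (fun x : ℝ => x ^ (j+1) * Real.log x ^ (k+1) / ((j:ℝ)+1)) 1 = 0 := by
          simp [Real.log_one]
        rw [← this]
        exact hcont.tendsto.mono_left nhdsWithin_le_nhds
    have hadd := intervalIntegral.integral_add (intervalIntegrable_pow_mul_log_pow j (k+1))
      ((intervalIntegrable_pow_mul_log_pow j k).const_mul (((k:ℝ)+1)/((j:ℝ)+1)))
    rw [hadd] at key
    rw [intervalIntegral.integral_const_mul, ih] at key
    have hpow : ((j:ℝ)+1) ^ (k+1+1) = ((j:ℝ)+1) ^ (k+1) * ((j:ℝ)+1) := by ring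
    have : (∫ x in (0:ℝ)..1, x ^ j * Real.log x ^ (k+1))
        = -(((k:ℝ)+1)/((j:ℝ)+1) * ((-1:ℝ) ^ k * k.factorial / ((j:ℝ)+1) ^ (k+1))) := by
      linarith
    rw [this, Nat.factorial_succ]
    push_cast
    field_simp
    ring

theorem integral_pow_mul_log_pow (n k : ℕ) (hn : 1 ≤ n) :
    (∫ x in (0:ℝ)..1, x ^ (n - 1) * (Real.log (1 - x)) ^ k) =
      ((-1 : ℝ) ^ k * (Nat.factorial k : ℝ) / (n : ℝ)) *
        ∑ l ∈ Finset.Icc 1 n, (n.choose l : ℝ) * (-1 : ℝ) ^ (l - 1) / (l : ℝ) ^ k := by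
  have hsub : (∫ x in (0:ℝ)..1, x ^ (n - 1) * (Real.log (1 - x)) ^ k)
      = ∫ x in (0:ℝ)..1, (1 - x) ^ (n - 1) * Real.log x ^ k := by
    have h := intervalIntegral.integral_comp_sub_left (a := (0:ℝ)) (b := 1)
      (fun y : ℝ => (1 - y) ^ (n - 1) * Real.log y ^ k) 1
    norm_num at h
    rw [← h]
  rw [hsub]
  have hexpand : ∀ x : ℝ, (1 - x) ^ (n - 1) * Real.log x ^ k
      = ∑ j ∈ Finset.range n, (((n-1).choose j : ℝ) * (-1:ℝ)^j) * (x ^ j * Real.log x ^ k) := by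
    intro x
    have h1 : (1 - x) ^ (n - 1) = ((-x) + 1) ^ (n - 1) := by ring_nf
    rw [h1, add_pow]
    have hr : n - 1 + 1 = n := Nat.succ_pred_eq_of_pos hn
    rw [hr, Finset.sum_mul]
    apply Finset.sum_congr rfl
    intro j _
    rw [neg_pow]
    ring
  rw [intervalIntegral.integral_congr (fun x _ => hexpand x)]
  rw [intervalIntegral.integral_finset_sum (fun j _ =>
    (intervalIntegrable_pow_mul_log_pow j k).const_mul _)]
  simp_rw [intervalIntegral.integral_const_mul, integral_pow_mul_log_pow_aux]
  rw [show Finset.Icc 1 n = Finset.Ico 1 (n+1) from by rw [Finset.Ico_add_one_right_eq_Icc]]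
  rw [Finset.sum_Ico_eq_sum_range]
  have hrn : n + 1 - 1 = n := by omega
  rw [hrn, Finset.mul_sum]
  apply Finset.sum_congr rfl
  intro j hj
  rw [Nat.add_comm 1 j]
  have hch : (n : ℝ) * ((n-1).choose j : ℝ) = ((j:ℝ)+1) * (n.choose (j+1) : ℝ) := by
    have h := Nat.add_one_mul_choose_eq (n-1) j
    rw [show n - 1 + 1 = n from by omega] at h
    have h2 := congrArg (Nat.cast (R := ℝ)) h
    push_cast at h2
    linarith
  have hn0 : (n:ℝ) ≠ 0 := by positivity
  have hj1 : ((j:ℝ)+1) ≠ 0 := by positivity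
  have hj1p : ((j:ℝ)+1) ^ k ≠ 0 := by positivity
  have h1j : (j + 1) - 1 = j := by omega
  rw [h1j]
  have hc' : ((n-1).choose j : ℝ) = ((j:ℝ)+1) * (n.choose (j+1) : ℝ) / n := by
    field_simp
    linarith [hch]
  rw [hc']
  push_cast
  field_simp
  ring
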